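/- Let d ≥ 2 and for 0 ≤ i ≤ d let Nᵢ be the number of permutations τ ∈ S_d with |supp(τ)| = i (points moved by τ), so that Σᵢ Nᵢ = d!. Define φ : [0,1] → [0,1] by φ(x) = (1/d!)·Σ_{i=0}^{d} Nᵢ·(1 − (1−x)^{d−i}). Then φ(0) = 0, φ is monotonically increasing on [0,1], and φ(x) < x for all x ∈ (0,1]; in particular, the unique fixed point of φ in [0,1] is 0. -/

import Mathlib

open Finset

private lemma stmt12_fix_card (d : ℕ) (τ : Equiv.Perm (Fin d))
    [Fintype (MulAction.fixedBy (Fin d) τ)] :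
    Fintype.card (MulAction.fixedBy (Fin d) τ) = d - τ.support.card := by
  have h : MulAction.fixedBy (Fin d) τ = ↑(τ.supportᶜ) := by
    ext x
    simp [MulAction.mem_fixedBy, Equiv.Perm.notMem_support]
  rw [← Nat.card_eq_fintype_card, h]
  rw [Nat.card_coe_set_eq, Set.ncard_coe_finset, Finset.card_compl, Fintype.card_fin]

private lemma stmt12_countA (d : ℕ) (hd : 1 ≤ d) :
    ∑ i ∈ Finset.range (d+1),
      ((Finset.univ.filter (fun τ : Equiv.Perm (Fin d) => τ.support.card = i)).card) * (d - i)
      = d.factorial := by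
  classical
  have hmaps : ∀ τ : Equiv.Perm (Fin d), τ ∈ (univ : Finset (Equiv.Perm (Fin d))) →
      τ.support.card ∈ Finset.range (d+1) := by
    intro τ _
    simp only [Finset.mem_range, Nat.lt_succ_iff]
    exact (Finset.card_le_univ _).trans (by simp)
  have h1 : ∑ i ∈ Finset.range (d+1),
      ((univ.filter (fun τ : Equiv.Perm (Fin d) => τ.support.card = i)).card) * (d - i)
      = ∑ τ : Equiv.Perm (Fin d), (d - τ.support.card) := by
    rw [← Finset.sum_fiberwise_of_maps_to hmaps (fun τ => d - τ.support.card)]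
    refine Finset.sum_congr rfl fun i _ => ?_
    have hc : ∀ τ ∈ univ.filter (fun τ : Equiv.Perm (Fin d) => τ.support.card = i),
        d - τ.support.card = d - i := fun τ hτ => by
      rw [Finset.mem_filter] at hτ; rw [hτ.2]
    rw [Finset.sum_congr rfl hc, Finset.sum_const, smul_eq_mul]
  rw [h1]
  haveI : MulAction.IsPretransitive (Equiv.Perm (Fin d)) (Fin d) := by
    constructor
    intro x y
    exact ⟨Equiv.swap x y, Equiv.swap_apply_left x y⟩
  haveI : ∀ τ : Equiv.Perm (Fin d), Fintype (MulAction.fixedBy (Fin d) τ) :=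
    fun τ => Fintype.ofFinite _
  haveI : Fintype (MulAction.orbitRel.Quotient (Equiv.Perm (Fin d)) (Fin d)) :=
    Fintype.ofFinite _
  have hb := MulAction.sum_card_fixedBy_eq_card_orbits_mul_card_group
    (G := Equiv.Perm (Fin d)) (X := Fin d)
  have hΩ : Fintype.card (MulAction.orbitRel.Quotient (Equiv.Perm (Fin d)) (Fin d)) = 1 := by
    have hsub : Subsingleton (MulAction.orbitRel.Quotient (Equiv.Perm (Fin d)) (Fin d)) :=
      (MulAction.pretransitive_iff_subsingleton_quotient _ _).mp inferInstance
    have hne : Nonempty (MulAction.orbitRel.Quotient (Equiv.Perm (Fin d)) (Fin d)) :=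
      ⟨Quotient.mk _ ⟨0, hd⟩⟩
    obtain ⟨x⟩ := hne
    exact Fintype.card_eq_one_iff.mpr ⟨x, fun y => Subsingleton.elim y x⟩
  have h2 : ∑ τ : Equiv.Perm (Fin d), (d - τ.support.card)
      = ∑ τ : Equiv.Perm (Fin d), Fintype.card (MulAction.fixedBy (Fin d) τ) :=
    Finset.sum_congr rfl fun τ _ => (stmt12_fix_card d τ).symm
  rw [h2, hb, hΩ, one_mul, Fintype.card_perm, Fintype.card_fin]

private lemma stmt12_bern_le (x : ℝ) (hx0 : 0 ≤ x) (hx1 : x ≤ 1) (k : ℕ) :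
    1 - (1 - x) ^ k ≤ k * x := by
  have h2 : (1:ℝ) + k * (-x) ≤ (1 - x) ^ k := by
    simpa [sub_eq_add_neg] using one_add_mul_le_pow (a := -x) (by linarith) k
  linarith

private lemma stmt12_bern_lt (x : ℝ) (hx0 : 0 < x) (hx1 : x ≤ 1) (n : ℕ) (hn : 2 ≤ n) :
    1 - (1 - x) ^ n < n * x := by
  have h0 : (∑ k ∈ Finset.range n, (1 - x) ^ k) * ((1 - x) - 1) = (1 - x) ^ n - 1 :=
    geom_sum_mul _ _
  have key : 1 - (1 - x) ^ n = x * (∑ k ∈ Finset.range n, (1 - x) ^ k) := by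
    linear_combination h0
  have hS : (∑ k ∈ Finset.range n, (1 - x) ^ k) < n := by
    have hlt : (∑ k ∈ Finset.range n, (1 - x) ^ k) < ∑ _k ∈ Finset.range n, (1:ℝ) := by
      refine Finset.sum_lt_sum (fun k _ => pow_le_one₀ (by linarith) (by linarith))
        ⟨1, Finset.mem_range.mpr (by omega), ?_⟩
      simpa using (by linarith : (1:ℝ) - x < 1)
    simpa using hlt
  calc 1 - (1 - x) ^ n = x * (∑ k ∈ Finset.range n, (1 - x) ^ k) := key
    _ < x * n := by exact mul_lt_mul_of_pos_left hS hx0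
    _ = n * x := mul_comm _ _

/-- Let `d ≥ 2` and let `Nᵢ` be the number of permutations `τ ∈ S_d` moving
exactly `i` points. Define `φ(x) = (1/d!)·∑_{i=0}^{d} Nᵢ·(1 − (1−x)^{d−i})`. Then
`φ(0) = 0`, `φ` is monotonically increasing on `[0,1]`, and `φ(x) < x` for all
`x ∈ (0,1]`; in particular the unique fixed point of `φ` in `[0,1]` is `0`. -/
theorem stmt12 (d : ℕ) (hd : 2 ≤ d)
    (N : ℕ → ℕ)
    (hN : ∀ i, N i =
      (Finset.univ.filter (fun τ : Equiv.Perm (Fin d) => τ.support.card = i)).card)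
    (φ : ℝ → ℝ)
    (hφ : ∀ x : ℝ, φ x = (1 / (d.factorial : ℝ)) *
      ∑ i ∈ Finset.range (d + 1), (N i : ℝ) * (1 - (1 - x) ^ (d - i))) :
    φ 0 = 0 ∧ MonotoneOn φ (Set.Icc 0 1) ∧
    (∀ x ∈ Set.Ioc (0 : ℝ) 1, φ x < x) ∧
    (∀ x ∈ Set.Icc (0 : ℝ) 1, φ x = x → x = 0) := by
  classical
  have hN0 : N 0 = 1 := by
    rw [hN]
    have h : (univ.filter (fun τ : Equiv.Perm (Fin d) => τ.support.card = 0)) = {1} := by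
      ext τ
      simp [Finset.card_eq_zero, Equiv.Perm.support_eq_empty_iff]
    rw [h, Finset.card_singleton]
  have hfact : (0:ℝ) < (d.factorial : ℝ) := by
    exact_mod_cast d.factorial_pos
  have hA : (∑ i ∈ Finset.range (d+1), (N i : ℝ) * ((d - i : ℕ) : ℝ))
      = (d.factorial : ℝ) := by
    have h := stmt12_countA d (by omega)
    have h' : ∑ i ∈ Finset.range (d+1), N i * (d - i) = d.factorial := by
      refine Eq.trans ?_ h
      exact Finset.sum_congr rfl fun i _ => by rw [hN]
    exact_mod_cast h'
  have hlt : ∀ x ∈ Set.Ioc (0 : ℝ) 1, φ x < x := by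
    intro x hx
    obtain ⟨hx0, hx1⟩ := hx
    rw [hφ]
    have hsum : ∑ i ∈ Finset.range (d+1), (N i : ℝ) * (1 - (1 - x) ^ (d - i))
        < ∑ i ∈ Finset.range (d+1), (N i : ℝ) * (((d - i : ℕ) : ℝ) * x) := by
      refine Finset.sum_lt_sum (fun i _ => ?_) ⟨0, Finset.mem_range.mpr (by omega), ?_⟩
      · exact mul_le_mul_of_nonneg_left
          (stmt12_bern_le x hx0.le hx1 (d - i)) (Nat.cast_nonneg _)
      · have hb := stmt12_bern_lt x hx0 hx1 d hd
        simpa [hN0] using hb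
    have hT : ∑ i ∈ Finset.range (d+1), (N i : ℝ) * (((d - i : ℕ) : ℝ) * x)
        = (d.factorial : ℝ) * x := by
      rw [← hA, Finset.sum_mul]
      exact Finset.sum_congr rfl fun i _ => by ring
    have h1 : (1 / (d.factorial : ℝ)) *
        (∑ i ∈ Finset.range (d+1), (N i : ℝ) * (1 - (1 - x) ^ (d - i)))
        < (1 / (d.factorial : ℝ)) * ((d.factorial : ℝ) * x) := by
      rw [← hT]
      exact mul_lt_mul_of_pos_left hsum (by positivity)
    calc (1 / (d.factorial : ℝ)) *
        (∑ i ∈ Finset.range (d+1), (N i : ℝ) * (1 - (1 - x) ^ (d - i)))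
        < (1 / (d.factorial : ℝ)) * ((d.factorial : ℝ) * x) := h1
      _ = x := by field_simp
  refine ⟨?_, ?_, hlt, ?_⟩
  · rw [hφ]; simp
  · intro x hx y hy hxy
    rw [hφ, hφ]
    refine mul_le_mul_of_nonneg_left (Finset.sum_le_sum fun i _ => ?_) (by positivity)
    refine mul_le_mul_of_nonneg_left ?_ (Nat.cast_nonneg _)
    have hpow : (1 - y) ^ (d - i) ≤ (1 - x) ^ (d - i) :=
      pow_le_pow_left₀ (by linarith [hy.2]) (by linarith) _
    linarith
  · intro x hx hfix
    by_contra hx0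
    have hx0' : 0 < x := lt_of_le_of_ne hx.1 (Ne.symm hx0)
    have := hlt x ⟨hx0', hx.2⟩
    linarith
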